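/- Let an extended N-series $G_*$ act on an extended N-series $K_*$. For $m\geq 1$, $g\in G_m$, $a\in K_i$ and $b\in K_j$ with $i,j\geq 1$, one has $[g,[a,b]]\equiv [[g,a],b]\cdot[a,[g,b]]\pmod{K_{m+i+j+1}}$; consequently the map $\tau_m(g)_i:K_i/K_{i+1}\to K_{m+i}/K_{m+i+1}$, $aK_{i+1}\mapsto [g,a]K_{m+i+1}$, is a degree $m$ derivation of the graded Lie algebra $\bigoplus_{i\geq 1}K_i/K_{i+1}$. -/

import Mathlib

open scoped commutatorElement

lemma johnson_commute_commutator {Q : Type*} [Group Q] {c a b : Q}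
    (h1 : Commute c a) (h2 : Commute c b) : Commute c ⁅a, b⁆ := by
  have := (h1.mul_right h2).mul_right (h1.inv_right.mul_right h2.inv_right)
  simpa [commutatorElement_def, mul_assoc] using this

lemma johnson_aux {Q : Type*} [Group Q] (x y u v : Q)
    (h1 : ⁅u, v⁆ = 1)
    (hcu : Commute u ⁅x, v⁆) (hcy : Commute y ⁅x, v⁆)
    (hdu : Commute u ⁅x, y⁆) (hdv : Commute v ⁅x, y⁆)
    (hex : Commute x ⁅u, y⁆) (hey : Commute y ⁅u, y⁆)
    (hev : Commute v ⁅u, y⁆) :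
    ⁅u * x, v * y⁆ * ⁅y, x⁆ = ⁅u, y⁆ * ⁅x, v⁆ := by
  have e1 : ⁅u * x, v * y⁆ = u * ⁅x, v * y⁆ * u⁻¹ * ⁅u, v * y⁆ := by group
  have e2 : ⁅x, v * y⁆ = ⁅x, v⁆ * (v * ⁅x, y⁆ * v⁻¹) := by group
  have e3 : ⁅u, v * y⁆ = ⁅u, v⁆ * (v * ⁅u, y⁆ * v⁻¹) := by group
  have f1 : v * ⁅x, y⁆ * v⁻¹ = ⁅x, y⁆ := by rw [hdv.eq, mul_inv_cancel_right]
  have f2 : v * ⁅u, y⁆ * v⁻¹ = ⁅u, y⁆ := by rw [hev.eq, mul_inv_cancel_right]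
  have hde : Commute ⁅u, y⁆ ⁅x, y⁆ :=
    johnson_commute_commutator hex.symm hey.symm
  have hce : Commute ⁅x, v⁆ ⁅u, y⁆ :=
    johnson_commute_commutator hcu.symm hcy.symm
  have f3 : u * (⁅x, v⁆ * ⁅x, y⁆) * u⁻¹ = ⁅x, v⁆ * ⁅x, y⁆ := by
    rw [(hcu.mul_right hdu).eq, mul_inv_cancel_right]
  rw [e1, e2, e3, h1, one_mul, f1, f2]
  rw [f3]
  have f4 : ⁅y, x⁆ = ⁅x, y⁆⁻¹ := (commutatorElement_inv x y).symm
  rw [f4, mul_assoc, mul_assoc, hde.inv_right.eq, mul_inv_cancel_left, hce.eq]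

/-- Let an extended N-series `G_*` act on an extended N-series `K_*`.  For `m ≥ 1`,
`g ∈ Gₘ`, `a ∈ Kᵢ`, `b ∈ Kⱼ` with `i, j ≥ 1`, one has
`[g,[a,b]] ≡ [[g,a],b] ⬝ [a,[g,b]]  (mod K_{m+i+j+1})`,
where `[g,a] = g(a)a⁻¹`.  Consequently (well-definedness and additivity also being
recorded), `τₘ(g)ᵢ : Kᵢ/K_{i+1} → K_{m+i}/K_{m+i+1}`, `aK_{i+1} ↦ [g,a]K_{m+i+1}`,
is a degree `m` derivation of the associated graded Lie algebra. -/
theorem johnson_tau_positive_derivation {G K : Type*} [Group G] [Group K]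
    (φ : G →* MulAut K) (Kf : ℕ → Subgroup K)
    (hK0 : Kf 0 = ⊤) (hdesc : ∀ i, Kf (i + 1) ≤ Kf i)
    (hcomm : ∀ i j, ⁅Kf i, Kf j⁆ ≤ Kf (i + j))
    (G' : ℕ → Subgroup G)
    (hG'0 : G' 0 = ⊤) (hG'desc : ∀ i, G' (i + 1) ≤ G' i)
    (hG'comm : ∀ i j, ⁅G' i, G' j⁆ ≤ G' (i + j))
    (hact : ∀ m n, ∀ g ∈ G' m, ∀ k ∈ Kf n, φ g k * k⁻¹ ∈ Kf (m + n)) :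
    ∀ m, 1 ≤ m → ∀ g ∈ G' m,
      -- well-definedness of `τₘ(g)ᵢ`
      (∀ i, 1 ≤ i → ∀ a ∈ Kf i, ∀ a' : K, a⁻¹ * a' ∈ Kf (i + 1) →
        (φ g a * a⁻¹)⁻¹ * (φ g a' * a'⁻¹) ∈ Kf (m + i + 1)) ∧
      -- additivity of `τₘ(g)ᵢ`
      (∀ i, 1 ≤ i → ∀ a ∈ Kf i, ∀ b ∈ Kf i,
        (φ g (a * b) * (a * b)⁻¹)⁻¹ *
          ((φ g a * a⁻¹) * (φ g b * b⁻¹)) ∈ Kf (m + i + 1)) ∧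
      -- the Leibniz congruence `[g,[a,b]] ≡ [[g,a],b] ⬝ [a,[g,b]] (mod K_{m+i+j+1})`
      (∀ i j, 1 ≤ i → 1 ≤ j → ∀ a ∈ Kf i, ∀ b ∈ Kf j,
        (⁅φ g a * a⁻¹, b⁆ * ⁅a, φ g b * b⁻¹⁆)⁻¹ *
          (φ g ⁅a, b⁆ * ⁅a, b⁆⁻¹) ∈ Kf (m + i + j + 1)) := by
  -- basic facts about the filtration
  have hC : ∀ s t : ℕ, ∀ x ∈ Kf s, ∀ y ∈ Kf t, ⁅x, y⁆ ∈ Kf (s + t) :=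
    fun s t x hx y hy => hcomm s t (Subgroup.commutator_mem_commutator hx hy)
  have hmono : ∀ s t : ℕ, s ≤ t → Kf t ≤ Kf s := by
    intro s t hst
    induction t with
    | zero => simpa [Nat.le_zero.mp hst] using le_refl (Kf 0)
    | succ n ih =>
      rcases Nat.lt_or_ge s (n+1) with h | h
      · exact le_trans (hdesc n) (ih (Nat.lt_succ_iff.mp h))
      · have : s = n + 1 := le_antisymm hst h
        simp [this]
  have hnorm : ∀ n, (Kf n).Normal := by
    intro n
    constructor
    intro h hh g'
    have hg' : g' ∈ Kf 0 := by rw [hK0]; trivial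
    have : ⁅g', h⁆ ∈ Kf n := by simpa using hC 0 n g' hg' h hh
    have e : g' * h * g'⁻¹ = ⁅g', h⁆ * h := by group
    rw [e]; exact mul_mem this hh
  intro m hm g hg
  refine ⟨?_, ?_, ?_⟩
  · -- well-definedness
    intro i _ a ha a' hc
    have ha'' : a' = a * (a⁻¹ * a') := by group
    set c := a⁻¹ * a' with hcdef
    have key : (φ g a * a⁻¹)⁻¹ * (φ g (a * c) * (a * c)⁻¹)
        = a * (φ g c * c⁻¹) * a⁻¹ := by rw [map_mul]; group
    rw [ha'']
    rw [key]
    have hmem : φ g c * c⁻¹ ∈ Kf (m + i + 1) := by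
      have := hact m (i+1) g hg c hc
      simpa [← Nat.add_assoc] using this
    simpa [mul_assoc] using (hnorm (m + i + 1)).conj_mem _ hmem a
  · -- additivity
    intro i hi a ha b hb
    have key : (φ g (a * b) * (a * b)⁻¹)⁻¹ * ((φ g a * a⁻¹) * (φ g b * b⁻¹))
        = ⁅a, (φ g b * b⁻¹)⁻¹⁆ := by rw [map_mul]; group
    rw [key]
    have : ⁅a, (φ g b * b⁻¹)⁻¹⁆ ∈ Kf (i + (m + i)) :=
      hC i (m+i) a ha _ (inv_mem (hact m i g hg b hb))
    exact hmono _ _ (by omega) this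
  · -- Leibniz congruence
    intro i j hi hj a ha b hb
    set N := m + i + j + 1 with hN
    haveI := hnorm N
    set p := φ g a * a⁻¹ with hp
    set q := φ g b * b⁻¹ with hq
    have hpK : p ∈ Kf (m + i) := hact m i g hg a ha
    have hqK : q ∈ Kf (m + j) := hact m j g hg b hb
    rw [← QuotientGroup.eq (s := Kf N)]
    -- rewrite the right-hand side
    have hY : φ g ⁅a, b⁆ * ⁅a, b⁆⁻¹ = ⁅p * a, q * b⁆ * ⁅b, a⁆ := by
      have e1 : φ g a = p * a := by rw [hp]; group
      have e2 : φ g b = q * b := by rw [hq]; group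
      rw [map_commutatorElement, commutatorElement_inv, e1, e2]
    rw [hY]
    -- work in the quotient
    have hcom : ∀ (s t : ℕ) (x : K), x ∈ Kf s → ∀ y ∈ Kf t, N ≤ s + t →
        Commute ((QuotientGroup.mk' (Kf N)) x) ((QuotientGroup.mk' (Kf N)) y) := by
      intro s t x hx y hy hst
      rw [← commutatorElement_eq_one_iff_commute, ← map_commutatorElement]
      exact (QuotientGroup.eq_one_iff _).mpr (hmono N (s+t) hst (hC s t x hx y hy))
    show (QuotientGroup.mk' (Kf N)) (⁅p, b⁆ * ⁅a, q⁆)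
        = (QuotientGroup.mk' (Kf N)) (⁅p * a, q * b⁆ * ⁅b, a⁆)
    simp only [map_mul, map_commutatorElement]
    set π := QuotientGroup.mk' (Kf N) with hπ
    have h1 : ⁅π p, π q⁆ = 1 := by
      rw [← map_commutatorElement]
      exact (QuotientGroup.eq_one_iff _).mpr
        (hmono N _ (by omega) (hC (m+i) (m+j) p hpK q hqK))
    have hcu : Commute (π p) ⁅π a, π q⁆ := by
      rw [← map_commutatorElement]
      exact hcom (m+i) (i+(m+j)) p hpK _ (hC i (m+j) a ha q hqK) (by omega)
    have hcy : Commute (π b) ⁅π a, π q⁆ := by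
      rw [← map_commutatorElement]
      exact hcom j (i+(m+j)) b hb _ (hC i (m+j) a ha q hqK) (by omega)
    have hdu : Commute (π p) ⁅π a, π b⁆ := by
      rw [← map_commutatorElement]
      exact hcom (m+i) (i+j) p hpK _ (hC i j a ha b hb) (by omega)
    have hdv : Commute (π q) ⁅π a, π b⁆ := by
      rw [← map_commutatorElement]
      exact hcom (m+j) (i+j) q hqK _ (hC i j a ha b hb) (by omega)
    have hex : Commute (π a) ⁅π p, π b⁆ := by
      rw [← map_commutatorElement]
      exact hcom i ((m+i)+j) a ha _ (hC (m+i) j p hpK b hb) (by omega)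
    have hey : Commute (π b) ⁅π p, π b⁆ := by
      rw [← map_commutatorElement]
      exact hcom j ((m+i)+j) b hb _ (hC (m+i) j p hpK b hb) (by omega)
    have hev : Commute (π q) ⁅π p, π b⁆ := by
      rw [← map_commutatorElement]
      exact hcom (m+j) ((m+i)+j) q hqK _ (hC (m+i) j p hpK b hb) (by omega)
    exact (johnson_aux (π a) (π b) (π p) (π q) h1 hcu hcy hdu hdv hex hey hev).symm
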